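/- For every nonempty finite set P ⊆ ℝ^d, there exists a support set S ⊆ P with |S| ≤ d + 1 such that the smallest enclosing ball of S equals the smallest enclosing ball of P (same center c* and same radius r*), and every point of S lies on the boundary sphere, i.e., dist(c*, s) = r* for all s ∈ S. -/

import Mathlib

set_option maxHeartbeats 1000000

open Finset

private lemma exists_inner_nonpos' {E : Type*} [NormedAddCommGroup E] [InnerProductSpace ℝ E]
    (S : Finset E) (c v : E) (hc : c ∈ convexHull ℝ (S : Set E)) :
    ∃ s ∈ S, (inner ℝ v (s - c) : ℝ) ≤ 0 := by
  rw [Finset.convexHull_eq] at hc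
  obtain ⟨w, hw0, hw1, hwc⟩ := hc
  by_contra h
  push_neg at h
  have hsum : ∑ y ∈ S, w y • y = c := by
    rw [Finset.centerMass, hw1, inv_one, one_smul] at hwc
    simpa using hwc
  have hzero : ∑ y ∈ S, w y * (inner ℝ v (y - c) : ℝ) = 0 := by
    have h0 : ∑ y ∈ S, w y • (y - c) = 0 := by
      simp only [smul_sub, Finset.sum_sub_distrib, hsum, ← Finset.sum_smul, hw1, one_smul,
        sub_self]
    calc ∑ y ∈ S, w y * (inner ℝ v (y - c) : ℝ)
        = (inner ℝ v (∑ y ∈ S, w y • (y - c)) : ℝ) := by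
          rw [inner_sum]
          exact Finset.sum_congr rfl fun y _ => (real_inner_smul_right _ _ _).symm
      _ = 0 := by rw [h0, inner_zero_right]
  have hex : ∃ y ∈ S, 0 < w y := by
    by_contra hne
    push_neg at hne
    have h0 : ∑ y ∈ S, w y = 0 :=
      le_antisymm (Finset.sum_nonpos hne) (Finset.sum_nonneg hw0)
    rw [hw1] at h0; linarith
  obtain ⟨y0, hy0S, hy0⟩ := hex
  have hpos : 0 < ∑ y ∈ S, w y * (inner ℝ v (y - c) : ℝ) :=
    Finset.sum_pos' (fun y hy => mul_nonneg (hw0 y hy) (h y hy).le)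
      ⟨y0, hy0S, mul_pos hy0 (h y0 hy0S)⟩
  rw [hzero] at hpos; exact lt_irrefl 0 hpos

/-- For every nonempty finite `P ⊆ ℝ^d` with smallest enclosing ball
of center `c*` (a minimizer of the farthest-distance function) and radius
`r* = f_P c*`, there exists a support set `S ⊆ P` with `|S| ≤ d + 1` such that the
smallest enclosing ball of `S` equals that of `P` (same center and radius), and
every point of `S` lies on the boundary sphere. -/
theorem support_set_exists (d : ℕ) (hd : 1 ≤ d)
    (P : Finset (EuclideanSpace ℝ (Fin d))) (hP : P.Nonempty)
    (c : EuclideanSpace ℝ (Fin d))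
    (hc : ∀ c' : EuclideanSpace ℝ (Fin d),
      P.sup' hP (fun p => dist c p) ≤ P.sup' hP (fun p => dist c' p)) :
    ∃ S : Finset (EuclideanSpace ℝ (Fin d)), S ⊆ P ∧ S.card ≤ d + 1 ∧
      ∃ hS : S.Nonempty,
        (∀ c' : EuclideanSpace ℝ (Fin d),
          S.sup' hS (fun p => dist c p) ≤ S.sup' hS (fun p => dist c' p)) ∧
        S.sup' hS (fun p => dist c p) = P.sup' hP (fun p => dist c p) ∧
        ∀ s ∈ S, dist c s = P.sup' hP (fun p => dist c p) := by
  classical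
  set r := P.sup' hP (fun p => dist c p) with hr
  have hle : ∀ p ∈ P, dist c p ≤ r := fun p hp => Finset.le_sup' _ hp
  obtain ⟨p0, hp0P, hp0⟩ := Finset.exists_mem_eq_sup' hP (fun p => dist c p)
  have hr0 : 0 ≤ r := le_trans dist_nonneg (hle p0 hp0P)
  set A := P.filter (fun p => dist c p = r) with hA
  have hAsub : A ⊆ P := Finset.filter_subset _ _
  have hAne : A.Nonempty := ⟨p0, Finset.mem_filter.2 ⟨hp0P, hp0.symm⟩⟩
  -- Step 1: the center lies in the convex hull of the boundary points.
  have hchull : c ∈ convexHull ℝ (A : Set (EuclideanSpace ℝ (Fin d))) := by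
    by_contra hcA
    obtain ⟨f, u, hfc, hfb⟩ := geometric_hahn_banach_point_closed
      (convex_convexHull ℝ _) (A.finite_toSet.isClosed_convexHull ℝ) hcA
    obtain ⟨v, hv⟩ := (InnerProductSpace.toDual ℝ _).surjective f
    have hfx : ∀ x, f x = (inner ℝ v x : ℝ) := fun x => by
      rw [← hv]; rfl
    set δ := u - f c with hδ
    have hδpos : 0 < δ := sub_pos.2 hfc
    have hfa : ∀ a ∈ A, δ < (inner ℝ v (a - c) : ℝ) := by
      intro a ha
      have h1 : u < f a := hfb a (subset_convexHull ℝ _ (Finset.mem_coe.2 ha))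
      rw [inner_sub_right, ← hfx, ← hfx]
      simp only [hδ]; linarith
    have hvne : v ≠ 0 := by
      intro hv0
      obtain ⟨a, ha⟩ := hAne
      have := hfa a ha
      rw [hv0, inner_zero_left] at this
      linarith
    have hvpos : 0 < ‖v‖ := norm_pos_iff.2 hvne
    set tp : EuclideanSpace ℝ (Fin d) → ℝ :=
      fun p => if dist c p = r then δ / ‖v‖ ^ 2 else (r - dist c p) / (2 * ‖v‖) with htp
    have htppos : ∀ p ∈ P, 0 < tp p := by
      intro p hp
      simp only [htp]
      split
      · positivity
      · rename_i hne
        have hlt : dist c p < r := lt_of_le_of_ne (hle p hp) hne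
        have : 0 < r - dist c p := by linarith
        positivity
    set t := P.inf' hP tp with ht
    have htpos : 0 < t := (Finset.lt_inf'_iff hP).2 htppos
    have hkey : ∀ p ∈ P, dist (c + t • v) p < r := by
      intro p hp
      have ht_le : t ≤ tp p := Finset.inf'_le tp hp
      by_cases hpA : dist c p = r
      · have hip : δ < (inner ℝ v (p - c) : ℝ) := hfa p (Finset.mem_filter.2 ⟨hp, hpA⟩)
        have htle' : t ≤ δ / ‖v‖ ^ 2 := by simpa only [htp, if_pos hpA] using ht_le
        have hsq : dist (c + t • v) p ^ 2 < r ^ 2 := by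
          have he : dist (c + t • v) p ^ 2
              = ‖t • v‖ ^ 2 - 2 * (inner ℝ (t • v) (p - c) : ℝ) + ‖p - c‖ ^ 2 := by
            rw [dist_eq_norm]
            have h2 : c + t • v - p = t • v - (p - c) := by abel
            rw [h2, norm_sub_sq_real]
          have h3 : (inner ℝ (t • v) (p - c) : ℝ) = t * (inner ℝ v (p - c) : ℝ) :=
            real_inner_smul_left _ _ _
          have h4 : ‖t • v‖ ^ 2 = t ^ 2 * ‖v‖ ^ 2 := by
            rw [norm_smul, mul_pow, Real.norm_eq_abs, sq_abs]
          have h5 : ‖p - c‖ = r := by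
            rw [show ‖p - c‖ = dist c p by rw [dist_eq_norm, norm_sub_rev], hpA]
          have h6 : t * ‖v‖ ^ 2 ≤ δ := (le_div_iff₀ (by positivity)).1 htle'
          rw [he, h3, h4, h5]
          nlinarith
        exact lt_of_pow_lt_pow_left₀ 2 hr0 hsq
      · have hlt : dist c p < r := lt_of_le_of_ne (hle p hp) hpA
        have htle' : t ≤ (r - dist c p) / (2 * ‖v‖) := by
          simpa only [htp, if_neg hpA] using ht_le
        have h1 : dist (c + t • v) p ≤ dist (c + t • v) c + dist c p := dist_triangle _ _ _
        have h2 : dist (c + t • v) c = t * ‖v‖ := by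
          rw [dist_eq_norm, add_sub_cancel_left, norm_smul, Real.norm_eq_abs,
            abs_of_pos htpos]
        have h3' : t * (2 * ‖v‖) ≤ r - dist c p := (le_div_iff₀ (by positivity)).1 htle'
        have h3 : t * ‖v‖ ≤ (r - dist c p) / 2 := by
          have hr2 : 2 * (t * ‖v‖) = t * (2 * ‖v‖) := by ring
          linarith
        have : 0 < r - dist c p := by linarith
        calc dist (c + t • v) p ≤ t * ‖v‖ + dist c p := by linarith
          _ ≤ (r - dist c p) / 2 + dist c p := by linarith
          _ < r := by linarith
    have hfin : P.sup' hP (fun p => dist (c + t • v) p) < r :=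
      (Finset.sup'_lt_iff hP).2 hkey
    have := hc (c + t • v)
    linarith
  -- Step 2: Carathéodory.
  rw [convexHull_eq_union] at hchull
  simp only [Set.mem_iUnion, exists_prop] at hchull
  obtain ⟨S, hSA, hSai, hcS⟩ := hchull
  have hSsubA : S ⊆ A := Finset.coe_subset.1 hSA
  have hSne : S.Nonempty := by
    rcases S.eq_empty_or_nonempty with h | h
    · subst h; simp at hcS
    · exact h
  have hSr : ∀ s ∈ S, dist c s = r := fun s hs => (Finset.mem_filter.1 (hSsubA hs)).2
  have hsupS : S.sup' hSne (fun p => dist c p) = r := by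
    apply le_antisymm
    · exact Finset.sup'_le _ _ fun s hs => (hSr s hs).le
    · obtain ⟨s, hs⟩ := hSne
      exact (hSr s hs).symm.le.trans (Finset.le_sup' _ hs)
  refine ⟨S, hSsubA.trans hAsub, ?_, hSne, ?_, hsupS, fun s hs => hSr s hs⟩
  · have h1 := hSai.card_le_finrank_succ
    rw [Fintype.card_coe] at h1
    have h2 := Submodule.finrank_le
      (vectorSpan ℝ (Set.range (Subtype.val : {x // x ∈ S} → EuclideanSpace ℝ (Fin d))))
    rw [finrank_euclideanSpace_fin] at h2
    omega
  · intro c'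
    obtain ⟨s, hsS, hsi⟩ := exists_inner_nonpos' S c (c' - c) hcS
    have hge : r ≤ dist c' s := by
      have h2 : dist c s ^ 2 ≤ dist c' s ^ 2 := by
        have he : dist c' s ^ 2
            = ‖c' - c‖ ^ 2 - 2 * (inner ℝ (c' - c) (s - c) : ℝ) + ‖s - c‖ ^ 2 := by
          rw [dist_eq_norm]
          have h5 : c' - s = (c' - c) - (s - c) := by abel
          rw [h5, norm_sub_sq_real]
        have h6 : ‖s - c‖ = dist c s := by rw [norm_sub_rev, ← dist_eq_norm]
        rw [he, h6]
        nlinarith [sq_nonneg ‖c' - c‖]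
      have := le_of_pow_le_pow_left₀ (by norm_num) dist_nonneg h2
      rwa [hSr s hsS] at this
    rw [hsupS]
    exact hge.trans (Finset.le_sup' _ hsS)
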